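/- Let Λ = Λ(t,x,u,p,q) be a smooth function of five real variables (p and q standing for the jet variables u_x and u_xx). Suppose that for all (t,x,u,p,q,r) ∈ ℝ⁶ one has ∂Λ/∂p = ∂²Λ/∂x∂q + p·∂²Λ/∂u∂q + q·∂²Λ/∂p∂q + r·∂²Λ/∂q² (i.e., Λ_p = D_x(Λ_q), where D_x = ∂_x + p·∂_u + q·∂_p + r·∂_q is the truncated total x-derivative). Then ∂²Λ/∂q² = 0 identically, so there are smooth functions a(t,x,u,p) and b(t,x,u,p) with Λ(t,x,u,p,q) = a(t,x,u,p)·q + b(t,x,u,p), and these satisfy ∂b/∂p = ∂a/∂x + p·∂a/∂u. -/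

import Mathlib

/-!
If a smooth Λ(t,x,u,p,q) satisfies Λ_p = D_x(Λ_q) with the truncated total
derivative D_x = ∂_x + p∂_u + q∂_p + r∂_q, then Λ_qq = 0, so Λ = a·q + b with
b_p = a_x + p·a_u.
-/

noncomputable section

/-- Smoothness of a function of five real variables. -/
def Smooth5 (Λ : ℝ → ℝ → ℝ → ℝ → ℝ → ℝ) : Prop :=
  ContDiff ℝ (⊤ : ℕ∞)
    (fun v : ℝ × ℝ × ℝ × ℝ × ℝ => Λ v.1 v.2.1 v.2.2.1 v.2.2.2.1 v.2.2.2.2)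

/-- Smoothness of a function of four real variables. -/
def Smooth4 (a : ℝ → ℝ → ℝ → ℝ → ℝ) : Prop :=
  ContDiff ℝ (⊤ : ℕ∞)
    (fun v : ℝ × ℝ × ℝ × ℝ => a v.1 v.2.1 v.2.2.1 v.2.2.2)

private lemma slice_hasDerivAt (F : ℝ × ℝ × ℝ × ℝ × ℝ → ℝ) (hF : Differentiable ℝ F)
    (t x u p q : ℝ) :
    HasDerivAt (fun s => F (t, x, u, p, s))
      (fderiv ℝ F (t, x, u, p, q) (0, 0, 0, 0, 1)) q := by
  have hc : HasDerivAt (fun s : ℝ => ((t, x, u, p, s) : ℝ × ℝ × ℝ × ℝ × ℝ))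
      ((0, 0, 0, 0, 1)) q :=
    (hasDerivAt_const q t).prodMk ((hasDerivAt_const q x).prodMk
      ((hasDerivAt_const q u).prodMk ((hasDerivAt_const q p).prodMk (hasDerivAt_id q))))
  exact (hF (t, x, u, p, q)).hasFDerivAt.comp_hasDerivAt q hc

/-- If `Λ(t,x,u,p,q)` is smooth and satisfies
`Λ_p = Λ_xq + p·Λ_uq + q·Λ_pq + r·Λ_qq` for all `(t,x,u,p,q,r)`, then
`Λ_qq = 0` identically, so `Λ = a(t,x,u,p)·q + b(t,x,u,p)` with smooth `a`, `b`
satisfying `b_p = a_x + p·a_u`. -/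
theorem multiplier_linear_in_uxx
    (Λ : ℝ → ℝ → ℝ → ℝ → ℝ → ℝ) (hΛ : Smooth5 Λ)
    (h : ∀ t x u p q r : ℝ,
      deriv (fun s => Λ t x u s q) p
        = deriv (fun y => deriv (fun s => Λ t y u p s) q) x
          + p * deriv (fun w => deriv (fun s => Λ t x w p s) q) u
          + q * deriv (fun z => deriv (fun s => Λ t x u z s) q) p
          + r * deriv (fun s => deriv (fun s' => Λ t x u p s') s) q) :
    (∀ t x u p q : ℝ,
      deriv (fun s => deriv (fun s' => Λ t x u p s') s) q = 0) ∧
    ∃ a b : ℝ → ℝ → ℝ → ℝ → ℝ, Smooth4 a ∧ Smooth4 b ∧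
      (∀ t x u p q : ℝ, Λ t x u p q = a t x u p * q + b t x u p) ∧
      (∀ t x u p : ℝ,
        deriv (fun s => b t x u s) p
          = deriv (fun y => a t y u p) x + p * deriv (fun w => a t x w p) u) := by
  set F : ℝ × ℝ × ℝ × ℝ × ℝ → ℝ :=
    fun v => Λ v.1 v.2.1 v.2.2.1 v.2.2.2.1 v.2.2.2.2 with hF
  have hFs : ContDiff ℝ (⊤ : ℕ∞) F := hΛ
  have hFd : Differentiable ℝ F := hFs.differentiable (by simp)
  -- the q-slice derivative
  have key : ∀ t x u p q : ℝ,
      HasDerivAt (fun s => Λ t x u p s)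
        (fderiv ℝ F (t, x, u, p, q) (0, 0, 0, 0, 1)) q :=
    fun t x u p q => slice_hasDerivAt F hFd t x u p q
  set G : ℝ × ℝ × ℝ × ℝ × ℝ → ℝ := fun v => fderiv ℝ F v (0, 0, 0, 0, 1) with hGdef
  have hGs : ContDiff ℝ (⊤ : ℕ∞) G := by
    exact (hFs.fderiv_right (le_refl _)).clm_apply contDiff_const
  have aderiv : ∀ t x u p q : ℝ,
      deriv (fun s => Λ t x u p s) q = G (t, x, u, p, q) :=
    fun t x u p q => (key t x u p q).deriv
  -- part 1 : Λ_qq = 0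
  have qq : ∀ t x u p q : ℝ,
      deriv (fun s => deriv (fun s' => Λ t x u p s') s) q = 0 := by
    intro t x u p q
    have h0 := h t x u p q 0
    have h1 := h t x u p q 1
    linarith
  refine ⟨qq, ?_⟩
  -- the q-derivative is constant in q
  have hGconst : ∀ t x u p q : ℝ, G (t, x, u, p, q) = G (t, x, u, p, 0) := by
    intro t x u p q
    have hdifferentiable : Differentiable ℝ (fun s : ℝ => G (t, x, u, p, s)) := by
      have hcurve : ContDiff ℝ (⊤ : ℕ∞)
          (fun s : ℝ => ((t, x, u, p, s) : ℝ × ℝ × ℝ × ℝ × ℝ)) := by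
        fun_prop
      exact (hGs.comp hcurve).differentiable (by simp)
    have hz : ∀ s : ℝ, deriv (fun s : ℝ => G (t, x, u, p, s)) s = 0 := by
      intro s
      have : (fun s : ℝ => G (t, x, u, p, s))
          = fun s => deriv (fun s' => Λ t x u p s') s := by
        funext s; exact (aderiv t x u p s).symm
      rw [this]; exact qq t x u p s
    exact is_const_of_deriv_eq_zero hdifferentiable hz q 0
  -- define a and b
  refine ⟨fun t x u p => deriv (fun s => Λ t x u p s) 0,
    fun t x u p => Λ t x u p 0, ?_, ?_, ?_, ?_⟩
  · -- Smooth4 a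
    have : (fun v : ℝ × ℝ × ℝ × ℝ => deriv (fun s => Λ v.1 v.2.1 v.2.2.1 v.2.2.2 s) 0)
        = fun v : ℝ × ℝ × ℝ × ℝ => G (v.1, v.2.1, v.2.2.1, v.2.2.2, 0) := by
      funext v; exact aderiv v.1 v.2.1 v.2.2.1 v.2.2.2 0
    unfold Smooth4
    rw [this]
    exact hGs.comp (by fun_prop)
  · -- Smooth4 b
    unfold Smooth4
    exact hFs.comp (f := fun v : ℝ × ℝ × ℝ × ℝ => ((v.1, v.2.1, v.2.2.1, v.2.2.2, 0) :
      ℝ × ℝ × ℝ × ℝ × ℝ)) (by fun_prop)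
  · -- Λ = a q + b
    intro t x u p q
    set c : ℝ := deriv (fun s => Λ t x u p s) 0 with hc
    have hc' : c = G (t, x, u, p, 0) := aderiv t x u p 0
    have hfd : ∀ s : ℝ, HasDerivAt (fun s => Λ t x u p s - c * s) 0 s := by
      intro s
      have h1 := (key t x u p s).sub ((hasDerivAt_id s).const_mul c)
      have : fderiv ℝ F (t, x, u, p, s) (0, 0, 0, 0, 1) - c * 1 = 0 := by
        have h2 := hGconst t x u p s
        simp only [hGdef] at h2
        have h3 : c = fderiv ℝ F (t, x, u, p, 0) (0, 0, 0, 0, 1) := by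
          simpa [hGdef] using hc'
        rw [h2, ← h3]; ring
      rwa [this] at h1
    have hconst := is_const_of_deriv_eq_zero
      (f := fun s => Λ t x u p s - c * s)
      (fun s => (hfd s).differentiableAt) (fun s => (hfd s).deriv) q 0
    simp only [mul_zero, sub_zero] at hconst
    linarith [hconst]
  · -- b_p = a_x + p a_u
    intro t x u p
    have h0 := h t x u p 0 0
    simpa using h0
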